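/- Under the hypotheses that generator 𝒢 of a random volume-preserving dynamical system has a spectral gap on H^{-s} with 1 a simple eigenvalue and no other peripheral spectrum, the system is multiply exponentially mixing: there exists θ ∈ (0,1) such that for each d ∈ ℕ there is C > 0 so that for all zero-mean φ₀,…,φ_{d−1} ∈ C¹(M), zero-mean φ_d ∈ H^{−s}, and times 0 = n₀ < n₁ < ⋯ < n_d with gaps m_j = n_j − n_{j−1} and L = min_j m_j, one has |𝔼_μ[∫ φ₀ · 𝒢^{m₁}(φ₁ · 𝒢^{m₂}(φ₂ ⋯ φ_{d−1} · 𝒢^{m_d}φ_d)) dx]| ≤ C θ^L (∏_{j<d}‖φ_j‖_{C¹}) ‖φ_d‖_{H^{−s}}. -/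

import Mathlib

open MeasureTheory

/-- The nested correlation expression
`mul φ₀ (𝒢^{m₁} (mul φ₁ (𝒢^{m₂} (⋯ mul φ_{d−1} (𝒢^{m_d} ψ)⋯))))`, where the list `l` holds the
pairs `(φ_{j-1}, m_j)`. -/
noncomputable def chain {B C : Type*} [NormedAddCommGroup B] [NormedSpace ℝ B]
    [NormedAddCommGroup C] [NormedSpace ℝ C]
    (𝒢 : B →L[ℝ] B) (mul : C →L[ℝ] B →L[ℝ] B) : List (C × ℕ) → B → B
  | [], ψ => ψ
  | p :: t, ψ => mul p.1 ((𝒢 ^ p.2) (chain 𝒢 mul t ψ))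

/-- Suppose the generator `𝒢` of a random volume-preserving system has a
spectral gap on `H^{−s}` (modelled by the Banach space `B`): `1` is a simple eigenvalue with
eigenvector the constant function `one`, the mean functional `m` is preserved, and `𝒢` decays
exponentially on the kernel of `m`. Multiplication by `C¹` functions (the space `C`) is a
bounded bilinear operation `mul` on `B`. Then the system is multiply exponentially mixing:
there is `θ ∈ (0,1)` such that for each `d` there is `C_d > 0` with
`|𝔼_μ[∫ φ₀ 𝒢^{m₁}(φ₁ 𝒢^{m₂}(⋯ φ_{d−1} 𝒢^{m_d} φ_d)) dx]|
  ≤ C_d θ^L (∏_{j<d} ‖φ_j‖_{C¹}) ‖φ_d‖_{H^{−s}}`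
for zero-mean `φ₀, …, φ_{d−1} ∈ C¹`, zero-mean `φ_d ∈ H^{−s}`, gaps `m_j ≥ 1` and
`L = min_j m_j`. -/
theorem stmt17 {B C : Type*} [NormedAddCommGroup B] [NormedSpace ℝ B]
    [NormedAddCommGroup C] [NormedSpace ℝ C]
    (𝒢 : B →L[ℝ] B) (mul : C →L[ℝ] B →L[ℝ] B)
    (m : B →L[ℝ] ℝ) (one : B)
    (hone : 𝒢 one = one) (hmone : m one = 1)
    (hGm : ∀ ψ : B, m (𝒢 ψ) = m ψ)
    (hgap : ∃ (C₀ θ₀ : ℝ), 0 < C₀ ∧ 0 < θ₀ ∧ θ₀ < 1 ∧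
      ∀ ψ : B, m ψ = 0 → ∀ n : ℕ, ‖(𝒢 ^ n) ψ‖ ≤ C₀ * θ₀ ^ n * ‖ψ‖) :
    ∃ θ : ℝ, 0 < θ ∧ θ < 1 ∧ ∀ d : ℕ, ∃ Cd : ℝ, 0 < Cd ∧
      ∀ l : List (C × ℕ), l.length = d →
        (∀ p ∈ l, 1 ≤ p.2 ∧ m (mul p.1 one) = 0) →
        ∀ ψ : B, m ψ = 0 →
        ∀ L : ℕ, (∀ p ∈ l, L ≤ p.2) →
          |m (chain 𝒢 mul l ψ)| ≤
            Cd * θ ^ L * (l.map fun p => ‖p.1‖).prod * ‖ψ‖ := by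
  obtain ⟨C₀, θ₀, hC₀, hθ₀, hθ₁, hdecay⟩ := hgap
  obtain ⟨A, hA⟩ : ∃ x : ℝ, x = ‖m‖ * ‖one‖ + C₀ * (1 + ‖m‖ * ‖one‖) := ⟨_, rfl⟩
  have hApos : 0 < A := by rw [hA]; positivity
  obtain ⟨K, hK⟩ : ∃ x : ℝ, x = max 1 (‖mul‖ * A) := ⟨_, rfl⟩
  have hK1 : (1:ℝ) ≤ K := hK ▸ le_max_left _ _
  have hKpos : (0:ℝ) < K := lt_of_lt_of_le one_pos hK1
  have hKA : ‖mul‖ * A ≤ K := hK ▸ le_max_right _ _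
  have hGone : ∀ n : ℕ, (𝒢 ^ n) one = one := by
    intro n
    induction n with
    | zero => simp
    | succ n ih => rw [pow_succ, ContinuousLinearMap.mul_apply, hone, ih]
  have hθpow1 : ∀ k : ℕ, θ₀ ^ k ≤ 1 := fun k => pow_le_one₀ hθ₀.le hθ₁.le
  have hm0 : ∀ χ : B, m (χ - m χ • one) = 0 := by
    intro χ; simp [hmone]
  have hsplit : ∀ (k : ℕ) (χ : B),
      (𝒢 ^ k) χ = m χ • one + (𝒢 ^ k) (χ - m χ • one) := by
    intro k χ
    rw [map_sub, (𝒢 ^ k).map_smul, hGone]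
    abel
  have hχ0 : ∀ χ : B, ‖χ - m χ • one‖ ≤ (1 + ‖m‖ * ‖one‖) * ‖χ‖ := by
    intro χ
    have h1 : |m χ| ≤ ‖m‖ * ‖χ‖ := by
      simpa [Real.norm_eq_abs] using m.le_opNorm χ
    calc ‖χ - m χ • one‖ ≤ ‖χ‖ + ‖m χ • one‖ := norm_sub_le _ _
      _ = ‖χ‖ + |m χ| * ‖one‖ := by rw [norm_smul, Real.norm_eq_abs]
      _ ≤ ‖χ‖ + (‖m‖ * ‖χ‖) * ‖one‖ := by
          have := mul_le_mul_of_nonneg_right h1 (norm_nonneg one)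
          linarith
      _ = (1 + ‖m‖ * ‖one‖) * ‖χ‖ := by ring
  have key : ∀ (k : ℕ) (χ : B), ‖(𝒢 ^ k) χ‖ ≤ A * ‖χ‖ := by
    intro k χ
    have h1 : |m χ| ≤ ‖m‖ * ‖χ‖ := by
      simpa [Real.norm_eq_abs] using m.le_opNorm χ
    have h2 := hdecay _ (hm0 χ) k
    have h3 := hχ0 χ
    have h4 := hθpow1 k
    have h5 : C₀ * θ₀ ^ k * ‖χ - m χ • one‖ ≤ C₀ * 1 * ((1 + ‖m‖ * ‖one‖) * ‖χ‖) :=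
      mul_le_mul (mul_le_mul_of_nonneg_left h4 hC₀.le) h3 (norm_nonneg _)
        (by positivity)
    have h6 := mul_le_mul_of_nonneg_right h1 (norm_nonneg one)
    calc ‖(𝒢 ^ k) χ‖ = ‖m χ • one + (𝒢 ^ k) (χ - m χ • one)‖ := by rw [hsplit]
      _ ≤ ‖m χ • one‖ + ‖(𝒢 ^ k) (χ - m χ • one)‖ := norm_add_le _ _
      _ = |m χ| * ‖one‖ + ‖(𝒢 ^ k) (χ - m χ • one)‖ := by
          rw [norm_smul, Real.norm_eq_abs]
      _ ≤ ‖m‖ * ‖χ‖ * ‖one‖ + C₀ * 1 * ((1 + ‖m‖ * ‖one‖) * ‖χ‖) := by linarith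
      _ = A * ‖χ‖ := by rw [hA]; ring
  have hprodnn : ∀ l : List (C × ℕ), (0:ℝ) ≤ (l.map fun p => ‖p.1‖).prod := by
    intro l
    apply List.prod_nonneg
    intro a ha
    obtain ⟨p, _, rfl⟩ := List.mem_map.mp ha
    exact norm_nonneg _
  have normchain : ∀ (l : List (C × ℕ)) (ψ : B),
      ‖chain 𝒢 mul l ψ‖ ≤ K ^ l.length * (l.map fun p => ‖p.1‖).prod * ‖ψ‖ := by
    intro l
    induction l with
    | nil => intro ψ; simp [chain]
    | cons p t ih =>
      intro ψ
      have h1 := key p.2 (chain 𝒢 mul t ψ)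
      have h2 := ih ψ
      calc ‖chain 𝒢 mul (p :: t) ψ‖
          = ‖mul p.1 ((𝒢 ^ p.2) (chain 𝒢 mul t ψ))‖ := rfl
        _ ≤ ‖mul p.1‖ * ‖(𝒢 ^ p.2) (chain 𝒢 mul t ψ)‖ := (mul p.1).le_opNorm _
        _ ≤ ‖mul‖ * ‖p.1‖ * ‖(𝒢 ^ p.2) (chain 𝒢 mul t ψ)‖ :=
            mul_le_mul_of_nonneg_right (mul.le_opNorm p.1) (norm_nonneg _)
        _ ≤ ‖mul‖ * ‖p.1‖ * (A * ‖chain 𝒢 mul t ψ‖) :=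
            mul_le_mul_of_nonneg_left h1 (by positivity)
        _ = (‖mul‖ * A) * (‖p.1‖ * ‖chain 𝒢 mul t ψ‖) := by ring
        _ ≤ K * (‖p.1‖ * ‖chain 𝒢 mul t ψ‖) :=
            mul_le_mul_of_nonneg_right hKA (by positivity)
        _ ≤ K * (‖p.1‖ * (K ^ t.length * (t.map fun p => ‖p.1‖).prod * ‖ψ‖)) := by
            apply mul_le_mul_of_nonneg_left _ hKpos.le
            exact mul_le_mul_of_nonneg_left h2 (norm_nonneg _)
        _ = K ^ (p :: t).length * ((p :: t).map fun p => ‖p.1‖).prod * ‖ψ‖ := by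
            simp only [List.length_cons, pow_succ, List.map_cons, List.prod_cons]
            ring
  refine ⟨θ₀, hθ₀, hθ₁, fun d => ?_⟩
  obtain ⟨D, hD⟩ : ∃ x : ℝ, x = ‖m‖ * ‖mul‖ * C₀ * (1 + ‖m‖ * ‖one‖) := ⟨_, rfl⟩
  have hDnn : (0:ℝ) ≤ D := by rw [hD]; positivity
  refine ⟨D * K ^ d + 1, by positivity, ?_⟩
  intro l hlen hper ψ hψ L hL
  match l, hlen with
  | [], hlen =>
    have h0 : m (chain 𝒢 mul [] ψ) = 0 := hψ
    rw [h0]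
    simp only [abs_zero, List.map_nil, List.prod_nil]
    have : (0:ℝ) ≤ (D * K ^ d + 1) * θ₀ ^ L * 1 * ‖ψ‖ := by positivity
    linarith
  | p :: t, hlen =>
    have hp := hper p (List.mem_cons_self)
    set χ := chain 𝒢 mul t ψ with hχdef
    have hmval : m (chain 𝒢 mul (p :: t) ψ) =
        m (mul p.1 ((𝒢 ^ p.2) (χ - m χ • one))) := by
      show m (mul p.1 ((𝒢 ^ p.2) χ)) = _
      rw [hsplit p.2 χ, (mul p.1).map_add, (mul p.1).map_smul, m.map_add,
        m.map_smul, hp.2, smul_zero, zero_add]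
    have hgapχ := hdecay _ (hm0 χ) p.2
    have hLle : θ₀ ^ p.2 ≤ θ₀ ^ L :=
      pow_le_pow_of_le_one hθ₀.le hθ₁.le (hL p (List.mem_cons_self))
    have hχ0b := hχ0 χ
    have hbound : |m (chain 𝒢 mul (p :: t) ψ)| ≤
        ‖m‖ * (‖mul‖ * ‖p.1‖ * (C₀ * θ₀ ^ L * ((1 + ‖m‖ * ‖one‖) * ‖χ‖))) := by
      rw [hmval]
      calc |m (mul p.1 ((𝒢 ^ p.2) (χ - m χ • one)))|
          ≤ ‖m‖ * ‖mul p.1 ((𝒢 ^ p.2) (χ - m χ • one))‖ := by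
            simpa [Real.norm_eq_abs] using m.le_opNorm (mul p.1 ((𝒢 ^ p.2) (χ - m χ • one)))
        _ ≤ ‖m‖ * (‖mul‖ * ‖p.1‖ * (C₀ * θ₀ ^ L * ((1 + ‖m‖ * ‖one‖) * ‖χ‖))) := by
            apply mul_le_mul_of_nonneg_left _ (norm_nonneg m)
            calc ‖mul p.1 ((𝒢 ^ p.2) (χ - m χ • one))‖
                ≤ ‖mul p.1‖ * ‖(𝒢 ^ p.2) (χ - m χ • one)‖ := (mul p.1).le_opNorm _
              _ ≤ ‖mul‖ * ‖p.1‖ * ‖(𝒢 ^ p.2) (χ - m χ • one)‖ :=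
                  mul_le_mul_of_nonneg_right (mul.le_opNorm p.1) (norm_nonneg _)
              _ ≤ ‖mul‖ * ‖p.1‖ * (C₀ * θ₀ ^ L * ((1 + ‖m‖ * ‖one‖) * ‖χ‖)) := by
                  apply mul_le_mul_of_nonneg_left _ (by positivity)
                  calc ‖(𝒢 ^ p.2) (χ - m χ • one)‖
                      ≤ C₀ * θ₀ ^ p.2 * ‖χ - m χ • one‖ := hgapχ
                    _ ≤ C₀ * θ₀ ^ L * ‖χ - m χ • one‖ :=
                        mul_le_mul_of_nonneg_right
                          (mul_le_mul_of_nonneg_left hLle hC₀.le) (norm_nonneg _)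
                    _ ≤ C₀ * θ₀ ^ L * ((1 + ‖m‖ * ‖one‖) * ‖χ‖) :=
                        mul_le_mul_of_nonneg_left hχ0b (by positivity)
    have htd : t.length + 1 = d := by simpa using hlen
    have hKd : K ^ t.length ≤ K ^ d := pow_le_pow_right₀ hK1 (by omega)
    have hPt := hprodnn t
    have hχK : ‖χ‖ ≤ K ^ d * (t.map fun p => ‖p.1‖).prod * ‖ψ‖ := by
      calc ‖χ‖ ≤ K ^ t.length * (t.map fun p => ‖p.1‖).prod * ‖ψ‖ := normchain t ψ
        _ ≤ K ^ d * (t.map fun p => ‖p.1‖).prod * ‖ψ‖ :=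
            mul_le_mul_of_nonneg_right
              (mul_le_mul_of_nonneg_right hKd hPt) (norm_nonneg ψ)
    have hprodcons : ((p :: t).map fun p => ‖p.1‖).prod =
        ‖p.1‖ * (t.map fun p => ‖p.1‖).prod := by simp
    have lhs_eq : ‖m‖ * (‖mul‖ * ‖p.1‖ * (C₀ * θ₀ ^ L * ((1 + ‖m‖ * ‖one‖) * ‖χ‖)))
        = D * θ₀ ^ L * ‖p.1‖ * ‖χ‖ := by rw [hD]; ring
    have hfinal : D * θ₀ ^ L * ‖p.1‖ * ‖χ‖
        ≤ (D * K ^ d + 1) * θ₀ ^ L * (‖p.1‖ * (t.map fun p => ‖p.1‖).prod) * ‖ψ‖ := by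
      calc D * θ₀ ^ L * ‖p.1‖ * ‖χ‖
          ≤ D * θ₀ ^ L * ‖p.1‖ * (K ^ d * (t.map fun p => ‖p.1‖).prod * ‖ψ‖) :=
            mul_le_mul_of_nonneg_left hχK (by positivity)
        _ = (D * K ^ d) * θ₀ ^ L * (‖p.1‖ * (t.map fun p => ‖p.1‖).prod) * ‖ψ‖ := by
            ring
        _ ≤ (D * K ^ d + 1) * θ₀ ^ L * (‖p.1‖ * (t.map fun p => ‖p.1‖).prod) * ‖ψ‖ := by
            have h9 : (0:ℝ) ≤ θ₀ ^ L * (‖p.1‖ * (t.map fun p => ‖p.1‖).prod) * ‖ψ‖ := by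
              positivity
            nlinarith
    rw [hprodcons]
    calc |m (chain 𝒢 mul (p :: t) ψ)|
        ≤ ‖m‖ * (‖mul‖ * ‖p.1‖ * (C₀ * θ₀ ^ L * ((1 + ‖m‖ * ‖one‖) * ‖χ‖))) := hbound
      _ = D * θ₀ ^ L * ‖p.1‖ * ‖χ‖ := lhs_eq
      _ ≤ (D * K ^ d + 1) * θ₀ ^ L * (‖p.1‖ * (t.map fun p => ‖p.1‖).prod) * ‖ψ‖ :=
          hfinal
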